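/- Let a, b ∈ ℝ be such that 1, a, b are linearly independent over ℚ. Then the additive subgroup of ℂ generated by the three elements 1, i, and a + ib is dense in ℂ; that is, the set {m + ni + k(a + ib) : m, n, k ∈ ℤ} has closure equal to all of ℂ. -/

import Mathlib

private lemma rigid {g x : ℝ} (hg : g ≠ 0)
    (h : ∀ τ : ℝ, 0 < τ → ∃ J : ℤ, |x - J * g| ≤ τ) : ∃ J : ℤ, x = J * g := by
  have hg3 : 0 < |g| / 3 := by positivity
  obtain ⟨J₀, hJ₀⟩ := h (|g| / 3) hg3
  refine ⟨J₀, ?_⟩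
  have key : ∀ τ : ℝ, 0 < τ → |x - J₀ * g| ≤ τ := by
    intro τ hτ
    obtain ⟨J, hJ⟩ := h (min τ (|g| / 3)) (lt_min hτ hg3)
    have hJJ : J = J₀ := by
      by_contra hne
      have h1 : (1 : ℝ) ≤ |(J₀ : ℝ) - J| := by
        have : J₀ - J ≠ 0 := sub_ne_zero.mpr (fun hh => hne hh.symm)
        calc (1:ℝ) = ((1:ℤ):ℝ) := by norm_num
          _ ≤ |((J₀ - J : ℤ) : ℝ)| := by
              rw [← Int.cast_abs]; exact_mod_cast Int.one_le_abs (by simpa using this)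
          _ = |(J₀ : ℝ) - J| := by push_cast; ring_nf
      have h2 : |(J₀:ℝ) * g - J * g| ≤ 2 * |g| / 3 := by
        have := abs_sub (x - J * g) (x - J₀ * g)
        calc |(J₀:ℝ) * g - J * g| = |(x - J * g) - (x - J₀ * g)| := by ring_nf
          _ ≤ |x - J * g| + |x - J₀ * g| := abs_sub _ _
          _ ≤ |g| / 3 + |g| / 3 := add_le_add (hJ.trans (min_le_right _ _)) hJ₀
          _ = 2 * |g| / 3 := by ring
      have h3 : |(J₀:ℝ) - J| * |g| ≤ 2 * |g| / 3 := by
        rw [← sub_mul, abs_mul] at h2; exact h2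
      have h4 : |g| ≤ 2 * |g| / 3 := le_trans (le_mul_of_one_le_left (abs_nonneg g) h1) h3
      have : 0 < |g| := abs_pos.mpr hg
      linarith
    subst hJJ
    exact hJ.trans (min_le_left _ _)
  by_contra hne
  have hpos : 0 < |x - J₀ * g| := abs_pos.mpr (sub_ne_zero.mpr (by intro hh; exact hne hh))
  have := key (|x - J₀ * g| / 2) (by linarith)
  linarith

private lemma dense1D {ξ : ℝ} (hξ : Irrational ξ) :
    Dense {x : ℝ | ∃ n k : ℤ, x = (n : ℝ) + (k : ℝ) * ξ} := by
  set D : AddSubgroup ℝ :=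
    { carrier := {x : ℝ | ∃ n k : ℤ, x = (n : ℝ) + (k : ℝ) * ξ}
      zero_mem' := ⟨0, 0, by norm_num⟩
      add_mem' := by
        rintro x y ⟨n, k, rfl⟩ ⟨n', k', rfl⟩
        exact ⟨n + n', k + k', by push_cast; ring⟩
      neg_mem' := by
        rintro x ⟨n, k, rfl⟩
        exact ⟨-n, -k, by push_cast; ring⟩ } with hD
  rcases D.dense_or_cyclic with h | ⟨g, hg⟩
  · exact h
  · exfalso
    have h1 : (1 : ℝ) ∈ D := ⟨1, 0, by norm_num⟩
    have h2 : ξ ∈ D := ⟨0, 1, by norm_num⟩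
    rw [hg, AddSubgroup.mem_closure_singleton] at h1 h2
    obtain ⟨p, hp⟩ := h1
    obtain ⟨q, hq⟩ := h2
    have hp0 : (p : ℝ) ≠ 0 := by
      intro hh
      rw [zsmul_eq_mul, hh, zero_mul] at hp
      norm_num at hp
    refine hξ ⟨(q : ℚ) / (p : ℚ), ?_⟩
    rw [zsmul_eq_mul] at hp hq
    push_cast
    rw [← hq]
    field_simp
    rw [mul_assoc, hp, mul_one]

open Filter Topology

private lemma star_lemma {K : AddSubgroup ℂ} (hK : IsClosed (K : Set ℂ)) {g : ℝ}
    (hg : g ≠ 0) (hreal : ∀ x : ℝ, (x : ℂ) ∈ K ↔ ∃ j : ℤ, x = (j : ℝ) * g)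
    {ε : ℝ} (hε : 0 < ε) :
    ∃ δ : ℝ, 0 < δ ∧ ∀ z ∈ K, |z.im| ≤ δ → ∃ j : ℤ, |z.re - (j : ℝ) * g| ≤ ε := by
  by_contra hcon
  push_neg at hcon
  have key : ∀ n : ℕ, ∃ w : ℂ, w ∈ K ∧ |w.im| ≤ 1 / (n + 1) ∧
      0 ≤ w.re ∧ w.re < |g| ∧ ∀ j : ℤ, ε < |w.re - (j : ℝ) * g| := by
    intro n
    obtain ⟨z, hzK, hzim, hzre⟩ := hcon (1 / (n + 1)) (by positivity)
    set c := |g| with hc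
    have hc0 : 0 < c := abs_pos.mpr hg
    -- the multiple of g to subtract
    have hmul : ∃ j : ℤ, (j : ℝ) * g = (⌊z.re / c⌋ : ℝ) * c := by
      rcases abs_cases g with ⟨h1, _⟩ | ⟨h1, _⟩
      · exact ⟨⌊z.re / c⌋, by rw [hc, h1]⟩
      · exact ⟨-⌊z.re / c⌋, by rw [hc, h1]; push_cast; ring⟩
    obtain ⟨j₀, hj₀⟩ := hmul
    refine ⟨z - ((j₀ : ℝ) * g : ℝ), K.sub_mem hzK ((hreal _).mpr ⟨j₀, rfl⟩), ?_, ?_, ?_, ?_⟩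
    · simpa using hzim
    · have := Int.fract_nonneg (z.re / c)
      have heq : (z - ((j₀ : ℝ) * g : ℝ)).re = c * Int.fract (z.re / c) := by
        simp only [Complex.sub_re, Complex.ofReal_re, hj₀]
        rw [Int.fract]
        field_simp
      rw [heq]; positivity
    · have hfr : Int.fract (z.re / c) < 1 := Int.fract_lt_one _
      have heq : (z - ((j₀ : ℝ) * g : ℝ)).re = c * Int.fract (z.re / c) := by
        simp only [Complex.sub_re, Complex.ofReal_re, hj₀]
        rw [Int.fract]
        field_simp
      rw [heq]
      calc c * Int.fract (z.re / c) < c * 1 := by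
            exact mul_lt_mul_of_pos_left hfr hc0
        _ = c := mul_one c
    · intro j
      have := hzre (j + j₀)
      simp only [Complex.sub_re, Complex.ofReal_re]
      convert this using 2
      · rfl
      push_cast
      ring
  choose w hwK hwim hwre0 hwrec hwfar using key
  have hbdd : ∀ n, w n ∈ Metric.closedBall (0 : ℂ) (|g| + 1) := by
    intro n
    rw [Metric.mem_closedBall, dist_zero_right]
    calc ‖w n‖ ≤ |(w n).re| + |(w n).im| := Complex.norm_le_abs_re_add_abs_im _
      _ ≤ |g| + 1 := by
          have h1 : |(w n).re| ≤ |g| := by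
            rw [abs_of_nonneg (hwre0 n)]; exact (hwrec n).le
          have h2 : |(w n).im| ≤ 1 := (hwim n).trans (by
            rw [div_le_one (by positivity)]; linarith [Nat.cast_nonneg (α := ℝ) n])
          linarith
  obtain ⟨L, _, φ, hφ, hL⟩ := (isCompact_closedBall (0 : ℂ) (|g| + 1)).tendsto_subseq hbdd
  have hLK : L ∈ K := hK.mem_of_tendsto hL (Filter.Eventually.of_forall fun n => hwK (φ n))
  have hLim : L.im = 0 := by
    have h1 : Tendsto (fun n => (w (φ n)).im) atTop (𝓝 L.im) :=
      (Complex.continuous_im.tendsto L).comp hL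
    have h2 : Tendsto (fun n => (w (φ n)).im) atTop (𝓝 0) := by
      have hb : ∀ n : ℕ, ‖(w (φ n)).im‖ ≤ 1 / ((n : ℝ) + 1) := by
        intro n
        calc ‖(w (φ n)).im‖ ≤ 1 / ((φ n : ℝ) + 1) := hwim (φ n)
          _ ≤ 1 / ((n : ℝ) + 1) := by
              apply one_div_le_one_div_of_le (by positivity)
              have h : n ≤ φ n := hφ.le_apply
              have h' : (n : ℝ) ≤ (φ n : ℝ) := Nat.cast_le.mpr h
              linarith
      exact squeeze_zero_norm hb tendsto_one_div_add_atTop_nhds_zero_nat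
    exact tendsto_nhds_unique h1 h2
  have hLreal : (L.re : ℂ) ∈ K := by
    have : (L.re : ℂ) = L := Complex.ext (by simp) (by simp [hLim])
    rwa [this]
  obtain ⟨j, hj⟩ := (hreal _).mp hLreal
  have h1 : Tendsto (fun n => |(w (φ n)).re - (j : ℝ) * g|) atTop (𝓝 |L.re - (j : ℝ) * g|) := by
    apply Tendsto.abs
    exact ((Complex.continuous_re.tendsto L).comp hL).sub tendsto_const_nhds
  have h2 : ε ≤ |L.re - (j : ℝ) * g| :=
    ge_of_tendsto h1 (Filter.Eventually.of_forall fun n => (hwfar (φ n) j).le)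
  rw [hj] at h2
  simp at h2
  linarith

private lemma prop_lemma {K : AddSubgroup ℂ} {g ε δ : ℝ} (hg : g ≠ 0) (hε : 0 < ε)
    (hε6 : 6 * ε ≤ |g|)
    (hstar : ∀ z ∈ K, |z.im| ≤ δ → ∃ j : ℤ, |z.re - (j : ℝ) * g| ≤ ε)
    {z₁ z : ℂ} (hz₁ : z₁ ∈ K) (hz : z ∈ K) (h1 : |z₁.im| ≤ δ)
    (h2 : |z.im| ≤ |z₁.im|) (ht₁ : |z₁.re| ≤ ε) (ht : |z.re| ≤ ε) :
    z.re * z₁.im = z₁.re * z.im := by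
  rcases eq_or_ne z₁.im 0 with hy₁ | hy₁
  · have hzim : z.im = 0 := by
      rw [hy₁] at h2
      simpa using le_antisymm (by simpa using h2) (abs_nonneg z.im)
    rw [hy₁, hzim, mul_zero, mul_zero]
  set y₁ := z₁.im with hy₁def
  have hmem : ∀ p q : ℤ, ((p : ℂ) * z - (q : ℂ) * z₁) ∈ K := by
    intro p q
    have := K.sub_mem (K.zsmul_mem hz p) (K.zsmul_mem hz₁ q)
    simpa [zsmul_eq_mul] using this
  have him : ∀ p q : ℤ, ((p : ℂ) * z - (q : ℂ) * z₁).im = (p : ℝ) * z.im - (q : ℝ) * y₁ := by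
    intro p q; simp [Complex.sub_im, Complex.mul_im, hy₁def]
  have hre : ∀ p q : ℤ, ((p : ℂ) * z - (q : ℂ) * z₁).re = (p : ℝ) * z.re - (q : ℝ) * z₁.re := by
    intro p q; simp [Complex.sub_re, Complex.mul_re]
  have hround : ∀ u : ℝ, |u - round u| ≤ 1 / 2 := fun u => abs_sub_round u
  set r : ℕ → ℤ := fun m => round ((m * z.im) / y₁) with hr
  set X : ℕ → ℝ := fun m => m * z.re - (r m) * z₁.re with hX
  have claim : ∀ m : ℕ, |X m| ≤ ε := by
    intro m
    induction m with
    | zero =>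
      have h0 : X 0 = 0 := by simp [hX, hr]
      rw [h0]; simpa using hε.le
    | succ m ih =>
      set w : ℂ := (((m : ℤ) + 1 : ℤ) : ℂ) * z - ((r (m + 1) : ℤ) : ℂ) * z₁ with hw
      have hwK : w ∈ K := hmem _ _
      have harg : (((m : ℤ) + 1 : ℤ) : ℝ) * z.im / y₁ = ((m + 1 : ℕ) : ℝ) * z.im / y₁ := by
        push_cast; ring
      have heq1 : r (m + 1) = round ((((m : ℤ) + 1 : ℤ) : ℝ) * z.im / y₁) := by
        rw [harg]
      have hwim : |w.im| ≤ δ := by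
        have h3 : w.im = (((m : ℤ) + 1 : ℤ) : ℝ) * z.im - (r (m + 1) : ℝ) * y₁ := him _ _
        set u : ℝ := (((m : ℤ) + 1 : ℤ) : ℝ) * z.im / y₁ with hu
        have h4 : w.im = y₁ * (u - (r (m + 1) : ℝ)) := by
          rw [h3, hu]; field_simp
        have h5 : |u - (r (m + 1) : ℝ)| ≤ 1 / 2 := by
          rw [heq1]; exact hround u
        rw [h4, abs_mul]
        calc |y₁| * |u - (r (m + 1) : ℝ)| ≤ |y₁| * (1 / 2) :=
              mul_le_mul_of_nonneg_left h5 (abs_nonneg _)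
          _ ≤ δ := by linarith [abs_nonneg y₁, h1]
      have hwre : w.re = X (m + 1) := by
        have h3 : w.re = (((m : ℤ) + 1 : ℤ) : ℝ) * z.re - (r (m + 1) : ℝ) * z₁.re := hre _ _
        rw [h3]; simp only [hX]; push_cast; ring
      obtain ⟨j, hj⟩ := hstar w hwK hwim
      rw [hwre] at hj
      have hrd : |(r (m + 1) : ℝ) - (r m : ℝ)| ≤ 2 := by
        set u1 : ℝ := (((m : ℤ) + 1 : ℤ) : ℝ) * z.im / y₁ with hu1
        set u0 : ℝ := (m : ℝ) * z.im / y₁ with hu0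
        have heq2 : r m = round u0 := by simp only [hr, hu0]
        have e1 : |u1 - round u1| ≤ 1 / 2 := hround u1
        have e2 : |u0 - round u0| ≤ 1 / 2 := hround u0
        have hq : |u1 - u0| ≤ 1 := by
          have hd : u1 - u0 = z.im / y₁ := by
            rw [hu1, hu0]; push_cast; field_simp; ring
          rw [hd, abs_div, div_le_one (abs_pos.mpr hy₁)]
          exact h2
        rw [heq1, heq2]
        have hsplit : (round u1 : ℝ) - (round u0 : ℝ)
            = ((u1 - u0) - (u1 - round u1)) + (u0 - round u0) := by ring
        rw [hsplit]
        have ha := abs_add_le ((u1 - u0) - (u1 - round u1)) (u0 - round u0)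
        have hb := abs_sub (u1 - u0) (u1 - round u1)
        linarith
      have hstep : |X (m + 1) - X m| ≤ 3 * ε := by
        have hd : X (m + 1) - X m = z.re - ((r (m + 1) : ℝ) - (r m : ℝ)) * z₁.re := by
          simp only [hX]; push_cast; ring
        rw [hd]
        have ha := abs_sub z.re (((r (m + 1) : ℝ) - (r m : ℝ)) * z₁.re)
        rw [abs_mul] at ha
        have hb := mul_le_mul hrd ht₁ (abs_nonneg _) (by norm_num : (0:ℝ) ≤ 2)
        linarith
      have hX1 : |X (m + 1)| ≤ 4 * ε := by
        have h := abs_add_le (X m) (X (m + 1) - X m)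
        have he : X m + (X (m + 1) - X m) = X (m + 1) := by ring
        rw [he] at h
        linarith
      have hj0 : j = 0 := by
        by_contra hj0
        have h5 : |g| ≤ |(j : ℝ) * g| := by
          rw [abs_mul]
          have : (1 : ℝ) ≤ |(j : ℝ)| := by
            rw [← Int.cast_abs]
            exact_mod_cast Int.one_le_abs hj0
          nlinarith [abs_nonneg g]
        have h6 : |(j : ℝ) * g| ≤ 5 * ε := by
          have h := abs_sub (X (m + 1)) (X (m + 1) - (j : ℝ) * g)
          have e : X (m + 1) - (X (m + 1) - (j : ℝ) * g) = (j : ℝ) * g := by ring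
          rw [e] at h
          linarith
        linarith
      rw [hj0] at hj
      simpa using hj
  by_contra hne
  set Dq : ℝ := z.re - (z.im / y₁) * z₁.re with hDq
  have hDne : Dq ≠ 0 := by
    intro hh
    apply hne
    rw [hDq] at hh
    have hzre : z.re = (z.im / y₁) * z₁.re := by linarith
    rw [hzre]
    field_simp
  obtain ⟨M, hM⟩ := exists_nat_gt ((3 / 2 * ε) / |Dq|)
  have hMbound : |(M : ℝ) * Dq| ≤ 3 / 2 * ε := by
    have h3 : (M : ℝ) * Dq = X M + ((r M : ℝ) - (M : ℝ) * z.im / y₁) * z₁.re := by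
      simp only [hDq, hX]
      field_simp
      ring
    have h4 : |(r M : ℝ) - (M : ℝ) * z.im / y₁| ≤ 1 / 2 := by
      rw [abs_sub_comm]
      have := hround ((M : ℝ) * z.im / y₁)
      simpa [hr] using this
    rw [h3]
    have ha := abs_add_le (X M) (((r M : ℝ) - (M : ℝ) * z.im / y₁) * z₁.re)
    rw [abs_mul] at ha
    have hb := mul_le_mul h4 ht₁ (abs_nonneg _) (by norm_num : (0:ℝ) ≤ 1/2)
    linarith [claim M]
  have hDpos : 0 < |Dq| := abs_pos.mpr hDne
  rw [div_lt_iff₀ hDpos] at hM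
  rw [abs_mul, Nat.abs_cast] at hMbound
  linarith

private lemma rere (m : ℤ) (u v : ℂ) : (u - (m : ℂ) * v).re = u.re - (m : ℝ) * v.re := by
  simp [Complex.sub_re, Complex.mul_re]

private lemma imim (m : ℤ) (u v : ℂ) : (u - (m : ℂ) * v).im = u.im - (m : ℝ) * v.im := by
  simp [Complex.sub_im, Complex.mul_im]

private lemma genre (a b : ℝ) (m n k : ℤ) :
    ((m : ℂ) + (n : ℂ) * Complex.I + (k : ℂ) * ((a : ℂ) + (b : ℂ) * Complex.I)).re
      = (m : ℝ) + (k : ℝ) * a := by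
  simp [Complex.add_re, Complex.mul_re, Complex.mul_im]

private lemma genim (a b : ℝ) (m n k : ℤ) :
    ((m : ℂ) + (n : ℂ) * Complex.I + (k : ℂ) * ((a : ℂ) + (b : ℂ) * Complex.I)).im
      = (n : ℝ) + (k : ℝ) * b := by
  simp [Complex.add_im, Complex.mul_re, Complex.mul_im]

private lemma genre' (a b x' : ℝ) (n k : ℤ) :
    ((x' : ℂ) + ((n : ℂ) * Complex.I + (k : ℂ) * ((a : ℂ) + (b : ℂ) * Complex.I))).re
      = x' + (k : ℝ) * a := by
  simp [Complex.add_re, Complex.mul_re, Complex.mul_im]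

private lemma genim' (a b x' : ℝ) (n k : ℤ) :
    ((x' : ℂ) + ((n : ℂ) * Complex.I + (k : ℂ) * ((a : ℂ) + (b : ℂ) * Complex.I))).im
      = (n : ℝ) + (k : ℝ) * b := by
  simp [Complex.add_im, Complex.mul_re, Complex.mul_im]

set_option maxHeartbeats 1000000 in
/-- if `1, a, b` are linearly independent over `ℚ`, then the additive
subgroup of `ℂ` generated by `1`, `i`, and `a + ib` is dense in `ℂ`. -/
theorem dense_subgroup_of_rationally_independent (a b : ℝ)
    (hind : ∀ q₀ q₁ q₂ : ℚ, (q₀ : ℝ) + (q₁ : ℝ) * a + (q₂ : ℝ) * b = 0 →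
      q₀ = 0 ∧ q₁ = 0 ∧ q₂ = 0) :
    Dense {z : ℂ | ∃ m n k : ℤ,
      z = (m : ℂ) + (n : ℂ) * Complex.I + (k : ℂ) * ((a : ℂ) + (b : ℂ) * Complex.I)} := by
  have irrB : Irrational b := by
    rintro ⟨q, hq⟩
    have h := hind (-q) 0 1 (by push_cast; rw [← hq]; ring)
    exact absurd h.2.2 one_ne_zero
  have irrA : Irrational a := by
    rintro ⟨q, hq⟩
    have h := hind (-q) 1 0 (by push_cast; rw [← hq]; ring)
    exact absurd h.2.1 one_ne_zero
  set G : AddSubgroup ℂ :=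
    { carrier := {z : ℂ | ∃ m n k : ℤ,
        z = (m : ℂ) + (n : ℂ) * Complex.I + (k : ℂ) * ((a : ℂ) + (b : ℂ) * Complex.I)}
      zero_mem' := ⟨0, 0, 0, by norm_num⟩
      add_mem' := by
        rintro x y ⟨m, n, k, rfl⟩ ⟨m', n', k', rfl⟩
        exact ⟨m + m', n + n', k + k', by push_cast; ring⟩
      neg_mem' := by
        rintro x ⟨m, n, k, rfl⟩
        exact ⟨-m, -n, -k, by push_cast; ring⟩ } with hGdef
  show Dense (G : Set ℂ)
  set Kc : AddSubgroup ℂ := G.topologicalClosure with hKdef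
  have hKclosed : IsClosed (Kc : Set ℂ) := G.isClosed_topologicalClosure
  have hGK : ∀ z ∈ G, z ∈ Kc := fun z hz => G.le_topologicalClosure hz
  have hcoe : (Kc : Set ℂ) = closure (G : Set ℂ) := rfl
  set H : AddSubgroup ℝ :=
    { carrier := {x : ℝ | (x : ℂ) ∈ Kc}
      zero_mem' := by
        show ((0 : ℝ) : ℂ) ∈ Kc
        simpa using Kc.zero_mem
      add_mem' := by
        intro x y hx hy
        show ((x + y : ℝ) : ℂ) ∈ Kc
        push_cast
        exact Kc.add_mem hx hy
      neg_mem' := by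
        intro x hx
        show ((-x : ℝ) : ℂ) ∈ Kc
        push_cast
        exact Kc.neg_mem hx } with hHdef
  have hmemH : ∀ x : ℝ, x ∈ H ↔ (x : ℂ) ∈ Kc := fun x => Iff.rfl
  have h1G : (1 : ℂ) ∈ G := ⟨1, 0, 0, by push_cast; ring⟩
  have hIG : Complex.I ∈ G := ⟨0, 1, 0, by push_cast; ring⟩
  have habG : ((a : ℂ) + (b : ℂ) * Complex.I) ∈ G := ⟨0, 0, 1, by push_cast; ring⟩
  have h1H : (1 : ℝ) ∈ H := by
    rw [hmemH]
    simpa using hGK _ h1G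
  have densB := dense1D irrB
  by_cases hHd : Dense (H : Set ℝ)
  · -- dense case : conclude
    intro z
    rw [show closure (G : Set ℂ) = (Kc : Set ℂ) from hcoe.symm]
    have : z ∈ closure (Kc : Set ℂ) := by
      rw [Metric.mem_closure_iff]
      intro ε hε
      have hyz : z.im ∈ closure {x : ℝ | ∃ n k : ℤ, x = (n : ℝ) + (k : ℝ) * b} := densB z.im
      rw [Metric.mem_closure_iff] at hyz
      obtain ⟨y, ⟨n, k, rfl⟩, hy⟩ := hyz (ε / 4) (by linarith)
      have hxz : (z.re - k * a) ∈ closure (H : Set ℝ) := hHd _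
      rw [Metric.mem_closure_iff] at hxz
      obtain ⟨x', hx'H, hx'⟩ := hxz (ε / 4) (by linarith)
      refine ⟨(x' : ℂ) + ((n : ℂ) * Complex.I + (k : ℂ) * ((a : ℂ) + (b : ℂ) * Complex.I)), ?_, ?_⟩
      · refine Kc.add_mem (hx'H) (hGK _ ?_)
        exact ⟨0, n, k, by push_cast; ring⟩
      · have hre : (z - ((x' : ℂ) + ((n : ℂ) * Complex.I
            + (k : ℂ) * ((a : ℂ) + (b : ℂ) * Complex.I)))).re = z.re - (x' + k * a) := by
          rw [Complex.sub_re, genre' a b x' n k]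
        have him : (z - ((x' : ℂ) + ((n : ℂ) * Complex.I
            + (k : ℂ) * ((a : ℂ) + (b : ℂ) * Complex.I)))).im = z.im - (n + k * b) := by
          rw [Complex.sub_im, genim' a b x' n k]
        rw [Complex.dist_eq]
        calc ‖_‖ ≤ |_| + |_| := Complex.norm_le_abs_re_add_abs_im _
          _ < ε := by
            rw [hre, him]
            rw [Real.dist_eq] at hy hx'
            have e1 : |z.re - (x' + k * a)| < ε / 4 := by
              have : z.re - (x' + k * a) = (z.re - k * a) - x' := by ring
              rw [this]; exact hx'
            have e2 : |z.im - ((n : ℝ) + (k : ℝ) * b)| < ε / 4 := hy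
            linarith
    rwa [hKclosed.closure_eq] at this
  · -- non-dense case : contradiction
    exfalso
    rcases H.dense_or_cyclic with hd | ⟨g, hgen⟩
    · exact hHd hd
    have h1H' := h1H
    rw [hgen, AddSubgroup.mem_closure_singleton] at h1H'
    obtain ⟨N, hN⟩ := h1H'
    rw [zsmul_eq_mul] at hN
    have hg0 : g ≠ 0 := by
      intro h; rw [h, mul_zero] at hN; norm_num at hN
    have hN0 : (N : ℝ) ≠ 0 := by
      intro h; rw [h, zero_mul] at hN; norm_num at hN
    have hreal : ∀ x : ℝ, (x : ℂ) ∈ Kc ↔ ∃ j : ℤ, x = (j : ℝ) * g := by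
      intro x
      constructor
      · intro hx
        have hxH : x ∈ H := hx
        rw [hgen, AddSubgroup.mem_closure_singleton] at hxH
        obtain ⟨j, hj⟩ := hxH
        exact ⟨j, by rw [← hj, zsmul_eq_mul]⟩
      · rintro ⟨j, rfl⟩
        have : ((j : ℝ) * g) ∈ H := by
          rw [hgen, AddSubgroup.mem_closure_singleton]
          exact ⟨j, by rw [zsmul_eq_mul]⟩
        exact this
    set ε₀ : ℝ := |g| / 6 with hε₀def
    have hε₀pos : 0 < ε₀ := by
      have : 0 < |g| := abs_pos.mpr hg0
      rw [hε₀def]; linarith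
    have hε₀6 : 6 * ε₀ ≤ |g| := by rw [hε₀def]; linarith
    obtain ⟨δ₀, hδ₀pos, hδ₀⟩ := star_lemma hKclosed hg0 hreal hε₀pos
    -- reference element
    have hy₁cl := densB (δ₀ / 2)
    rw [Metric.mem_closure_iff] at hy₁cl
    obtain ⟨y₁, ⟨n₁, k₁, rfl⟩, hy₁d⟩ := hy₁cl (δ₀ / 4) (by linarith)
    set y₁ : ℝ := (n₁ : ℝ) + (k₁ : ℝ) * b with hy₁def
    rw [Real.dist_eq] at hy₁d
    have hy₁pos : 0 < y₁ := by
      rcases abs_lt.mp hy₁d with ⟨hl, hr⟩; linarith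
    have hy₁le : y₁ ≤ δ₀ := by
      rcases abs_lt.mp hy₁d with ⟨hl, hr⟩; linarith
    set e₁ : ℂ := ((0 : ℤ) : ℂ) + (n₁ : ℂ) * Complex.I + (k₁ : ℂ) * ((a : ℂ) + (b : ℂ) * Complex.I)
      with he₁def
    have he₁K : e₁ ∈ Kc := hGK _ ⟨0, n₁, k₁, rfl⟩
    have he₁re : e₁.re = (k₁ : ℝ) * a := by
      rw [he₁def, genre a b 0 n₁ k₁]; push_cast; ring
    have he₁im : e₁.im = y₁ := by
      rw [he₁def, genim a b 0 n₁ k₁, hy₁def]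
    obtain ⟨j₁, hj₁⟩ := hδ₀ e₁ he₁K (by rw [he₁im, abs_of_pos hy₁pos]; exact hy₁le)
    set z₁ : ℂ := e₁ - (((j₁ : ℝ) * g : ℝ) : ℂ) with hz₁def
    have hz₁K : z₁ ∈ Kc := Kc.sub_mem he₁K ((hreal _).mpr ⟨j₁, rfl⟩)
    have hz₁re : z₁.re = e₁.re - (j₁ : ℝ) * g := by
      simp [hz₁def, Complex.sub_re]
    have hz₁im : z₁.im = y₁ := by
      simp [hz₁def, Complex.sub_im, he₁im]
    have hz₁reb : |z₁.re| ≤ ε₀ := by rw [hz₁re, he₁re] at *; exact hj₁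
    set γ : ℝ := z₁.re / y₁ with hγdef
    -- main approximation step
    have main : ∀ σ : ℝ, 0 < σ → σ ≤ ε₀ →
        (∃ J : ℤ, |a - γ * b - (J : ℝ) * g| ≤ σ * (1 + |γ|)) ∧
        (∃ J : ℤ, |γ - (J : ℝ) * g| ≤ σ * (1 + |γ|)) := by
      intro σ hσ hσε
      obtain ⟨δσ, hδσpos, hδσ⟩ := star_lemma hKclosed hg0 hreal hσ
      set d : ℝ := min (min δσ δ₀) (min y₁ σ) with hddef
      have hdpos : 0 < d := by
        apply lt_min (lt_min hδσpos hδ₀pos) (lt_min hy₁pos hσ)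
      have hycl := densB (d / 2)
      rw [Metric.mem_closure_iff] at hycl
      obtain ⟨y, ⟨n, k, rfl⟩, hyd⟩ := hycl (d / 4) (by linarith)
      set y : ℝ := (n : ℝ) + (k : ℝ) * b with hydef
      rw [Real.dist_eq] at hyd
      have hypos : 0 < y := by rcases abs_lt.mp hyd with ⟨hl, hr⟩; linarith
      have hyled : y ≤ d := by rcases abs_lt.mp hyd with ⟨hl, hr⟩; linarith
      have hy0 : y ≠ 0 := ne_of_gt hypos
      set e : ℂ := ((0 : ℤ) : ℂ) + (n : ℂ) * Complex.I + (k : ℂ) * ((a : ℂ) + (b : ℂ) * Complex.I)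
        with hedef
      have heK : e ∈ Kc := hGK _ ⟨0, n, k, rfl⟩
      have here : e.re = (k : ℝ) * a := by
        rw [hedef, genre a b 0 n k]; push_cast; ring
      have heim : e.im = y := by
        rw [hedef, genim a b 0 n k, hydef]
      have hyδσ : |y| ≤ δσ := by
        rw [abs_of_pos hypos]
        exact hyled.trans ((min_le_left _ _).trans (min_le_left _ _))
      obtain ⟨j, hj⟩ := hδσ e heK (by rw [heim]; exact hyδσ)
      set zσ : ℂ := e - (((j : ℝ) * g : ℝ) : ℂ) with hzσdef
      have hzσK : zσ ∈ Kc := Kc.sub_mem heK ((hreal _).mpr ⟨j, rfl⟩)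
      have hzσre : zσ.re = e.re - (j : ℝ) * g := by simp [hzσdef, Complex.sub_re]
      have hzσim : zσ.im = y := by simp [hzσdef, Complex.sub_im, heim]
      have hzσreb : |zσ.re| ≤ σ := by rw [hzσre]; exact hj
      -- proportionality
      have hprop := prop_lemma hg0 hε₀pos hε₀6 hδ₀ hz₁K hzσK
        (by rw [hz₁im, abs_of_pos hy₁pos]; exact hy₁le)
        (by rw [hzσim, hz₁im, abs_of_pos hypos, abs_of_pos hy₁pos]
            exact hyled.trans ((min_le_right _ _).trans (min_le_left _ _)))
        hz₁reb (hzσreb.trans hσε)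
      have ht_eq : zσ.re = γ * y := by
        have h := hprop
        rw [hzσim, hz₁im] at h
        rw [hγdef]
        field_simp
        linear_combination h
      have hyσ : y ≤ σ := hyled.trans ((min_le_right _ _).trans (min_le_right _ _))
      constructor
      · -- relation for a : use element a + b I
        set m : ℤ := round (b / y) with hmdef
        set w : ℂ := ((a : ℂ) + (b : ℂ) * Complex.I) - (m : ℂ) * zσ with hwdef
        have hwK : w ∈ Kc := by
          have := Kc.sub_mem (hGK _ habG) (Kc.zsmul_mem hzσK m)
          simpa [zsmul_eq_mul] using this
        have hwim : w.im = b - (m : ℝ) * y := by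
          rw [hwdef, imim, hzσim,
            show ((a : ℂ) + (b : ℂ) * Complex.I).im = b from by simp]
        have hwimb : |w.im| ≤ δσ := by
          rw [hwim]
          have : b - (m : ℝ) * y = y * (b / y - (m : ℝ)) := by field_simp
          rw [this, abs_mul]
          have hround := abs_sub_round (b / y)
          calc |y| * |b / y - (m : ℝ)| ≤ |y| * (1 / 2) := by
                apply mul_le_mul_of_nonneg_left _ (abs_nonneg _)
                rw [hmdef]; exact hround
            _ ≤ δσ := by
                have := hyδσ
                have h0 := abs_nonneg y
                linarith
        obtain ⟨J, hJ⟩ := hδσ w hwK hwimb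
        have hwre : w.re = a - γ * b + γ * (b - (m : ℝ) * y) := by
          rw [hwdef, rere, show ((a : ℂ) + (b : ℂ) * Complex.I).re = a from by simp, ht_eq]
          ring
        refine ⟨J, ?_⟩
        have hsmall : |γ * (b - (m : ℝ) * y)| ≤ |γ| * (|y| * (1 / 2)) := by
          rw [abs_mul]
          apply mul_le_mul_of_nonneg_left _ (abs_nonneg _)
          have : b - (m : ℝ) * y = y * (b / y - (m : ℝ)) := by field_simp
          rw [this, abs_mul]
          apply mul_le_mul_of_nonneg_left _ (abs_nonneg _)
          rw [hmdef]; exact abs_sub_round (b / y)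
        rw [hwre] at hJ
        have habs := abs_sub (a - γ * b + γ * (b - (m : ℝ) * y) - (J : ℝ) * g)
          (γ * (b - (m : ℝ) * y))
        have heq2 : a - γ * b + γ * (b - (m : ℝ) * y) - (J : ℝ) * g
            - γ * (b - (m : ℝ) * y) = a - γ * b - (J : ℝ) * g := by ring
        rw [heq2] at habs
        have hyabs : |y| ≤ σ := by rw [abs_of_pos hypos]; exact hyσ
        have hms : |γ| * (|y| * (1 / 2)) ≤ |γ| * σ := by
          apply mul_le_mul_of_nonneg_left _ (abs_nonneg _)
          linarith [abs_nonneg y]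
        have hexp : σ * (1 + |γ|) = σ + |γ| * σ := by ring
        rw [hexp]
        linarith [habs, hJ, hsmall, hms]
      · -- relation for γ : use element I
        set m : ℤ := round (1 / y) with hmdef
        set w : ℂ := Complex.I - (m : ℂ) * zσ with hwdef
        have hwK : w ∈ Kc := by
          have := Kc.sub_mem (hGK _ hIG) (Kc.zsmul_mem hzσK m)
          simpa [zsmul_eq_mul] using this
        have hwim : w.im = 1 - (m : ℝ) * y := by
          rw [hwdef, imim, hzσim, Complex.I_im]
        have hwimb : |w.im| ≤ δσ := by
          rw [hwim]
          have : 1 - (m : ℝ) * y = y * (1 / y - (m : ℝ)) := by field_simp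
          rw [this, abs_mul]
          have hround := abs_sub_round (1 / y)
          calc |y| * |1 / y - (m : ℝ)| ≤ |y| * (1 / 2) := by
                apply mul_le_mul_of_nonneg_left _ (abs_nonneg _)
                rw [hmdef]; exact hround
            _ ≤ δσ := by
                have := hyδσ
                have h0 := abs_nonneg y
                linarith
        obtain ⟨J, hJ⟩ := hδσ w hwK hwimb
        have hwre : w.re = -γ + γ * (1 - (m : ℝ) * y) := by
          rw [hwdef, rere, Complex.I_re, ht_eq]
          ring
        refine ⟨-J, ?_⟩
        have hsmall : |γ * (1 - (m : ℝ) * y)| ≤ |γ| * (|y| * (1 / 2)) := by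
          rw [abs_mul]
          apply mul_le_mul_of_nonneg_left _ (abs_nonneg _)
          have : 1 - (m : ℝ) * y = y * (1 / y - (m : ℝ)) := by field_simp
          rw [this, abs_mul]
          apply mul_le_mul_of_nonneg_left _ (abs_nonneg _)
          rw [hmdef]; exact abs_sub_round (1 / y)
        rw [hwre] at hJ
        have heq3 : |γ - ((-J : ℤ) : ℝ) * g| = |(-γ + γ * (1 - (m : ℝ) * y) - (J : ℝ) * g)
            - γ * (1 - (m : ℝ) * y)| := by
          push_cast
          rw [show -γ + γ * (1 - (m : ℝ) * y) - (J : ℝ) * g - γ * (1 - (m : ℝ) * y)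
            = -(γ - -(J : ℝ) * g) by ring, abs_neg]
        rw [heq3]
        have habs := abs_sub (-γ + γ * (1 - (m : ℝ) * y) - (J : ℝ) * g)
          (γ * (1 - (m : ℝ) * y))
        have hyabs : |y| ≤ σ := by rw [abs_of_pos hypos]; exact hyσ
        have hms : |γ| * (|y| * (1 / 2)) ≤ |γ| * σ := by
          apply mul_le_mul_of_nonneg_left _ (abs_nonneg _)
          linarith [abs_nonneg y]
        have hexp : σ * (1 + |γ|) = σ + |γ| * σ := by ring
        rw [hexp]
        linarith [habs, hJ, hsmall, hms]
    -- extract exact relations via rigidity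
    have hGpos : 0 < 1 + |γ| := by linarith [abs_nonneg γ]
    have relA : ∃ P : ℤ, γ = (P : ℝ) * g := by
      apply rigid hg0
      intro τ hτ
      have hσpos : 0 < min ε₀ (τ / (1 + |γ|)) := lt_min hε₀pos (by positivity)
      obtain ⟨_, ⟨J, hJ⟩⟩ := main _ hσpos (min_le_left _ _)
      refine ⟨J, hJ.trans ?_⟩
      calc min ε₀ (τ / (1 + |γ|)) * (1 + |γ|) ≤ (τ / (1 + |γ|)) * (1 + |γ|) := by
            apply mul_le_mul_of_nonneg_right (min_le_right _ _) (le_of_lt hGpos)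
        _ = τ := by field_simp
    have relB : ∃ Q : ℤ, a - γ * b = (Q : ℝ) * g := by
      apply rigid hg0
      intro τ hτ
      have hσpos : 0 < min ε₀ (τ / (1 + |γ|)) := lt_min hε₀pos (by positivity)
      obtain ⟨⟨J, hJ⟩, _⟩ := main _ hσpos (min_le_left _ _)
      refine ⟨J, hJ.trans ?_⟩
      calc min ε₀ (τ / (1 + |γ|)) * (1 + |γ|) ≤ (τ / (1 + |γ|)) * (1 + |γ|) := by
            apply mul_le_mul_of_nonneg_right (min_le_right _ _) (le_of_lt hGpos)
        _ = τ := by field_simp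
    obtain ⟨P, hP⟩ := relA
    obtain ⟨Q, hQ⟩ := relB
    have key : (N : ℝ) * a = (P : ℝ) * b + (Q : ℝ) := by
      linear_combination (N : ℝ) * hQ + ((N : ℝ) * b) * hP + ((P : ℝ) * b + (Q : ℝ)) * hN
    have hfin := hind (-(Q : ℚ) / (N : ℚ)) 1 (-(P : ℚ) / (N : ℚ)) ?_
    · exact absurd hfin.2.1 one_ne_zero
    · have hNQ : ((N : ℚ) : ℝ) ≠ 0 := by exact_mod_cast hN0
      push_cast
      field_simp
      linear_combination key
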